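/- Let E be a nonzero reflexive Banach space and A be a monotone subset of E × E*. Then A is maximally monotone if and only if A − G(−J) = E × E*, i.e. every element of E × E* can be written a − b with a ∈ A and b ∈ G(−J), where J is the duality map. -/

import Mathlib

open scoped Pointwise

noncomputable section

variable {E : Type*} [NormedAddCommGroup E] [NormedSpace ℝ E]

/-- `E` is reflexive: the canonical map into the double dual is surjective. -/
def ReflexiveSp (E : Type*) [NormedAddCommGroup E] [NormedSpace ℝ E] : Prop :=
  Function.Surjective (NormedSpace.inclusionInDoubleDual ℝ E)

/-- The SSD pairing `⌊(x,x*),(y,y*)⌋ = ⟨x,y*⟩ + ⟨y,x*⟩` on `E × E*`. -/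
def pairP (p r : E × StrongDual ℝ E) : ℝ := r.2 p.1 + p.2 r.1

/-- `q(x,x*) = ⟨x,x*⟩`. -/
def qP (p : E × StrongDual ℝ E) : ℝ := p.2 p.1

/-- The intrinsic conjugate `f^@(c) = sup_b (⌊b,c⌋ - f(b))` on `E × E*`. -/
def conjP (f : E × StrongDual ℝ E → EReal) (c : E × StrongDual ℝ E) : EReal :=
  ⨆ b : E × StrongDual ℝ E, ((pairP b c : ℝ) : EReal) - f b

/-- A proper function into `(-∞,∞]`: never `⊥` and somewhere finite. -/
def ProperFnP (f : E × StrongDual ℝ E → EReal) : Prop :=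
  (∀ p, f p ≠ ⊥) ∧ ∃ p, f p ≠ ⊤

/-- Convexity for `(-∞,∞]`-valued functions on `E × E*`. -/
def ConvexFnP (f : E × StrongDual ℝ E → EReal) : Prop :=
  ∀ p r : E × StrongDual ℝ E, ∀ t : ℝ, 0 ≤ t → t ≤ 1 →
    f (t • p + (1 - t) • r) ≤ (t : EReal) * f p + ((1 - t : ℝ) : EReal) * f r

/-- `P_q(f) = {b : f(b) = q(b)}`. -/
def PqP (f : E × StrongDual ℝ E → EReal) : Set (E × StrongDual ℝ E) :=
  {p | f p = ((qP p : ℝ) : EReal)}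

/-- `f` is a BC-function: `f^@(b) ≥ f(b) ≥ q(b)` for all `b`. -/
def IsBCP (f : E × StrongDual ℝ E → EReal) : Prop :=
  ∀ p : E × StrongDual ℝ E, ((qP p : ℝ) : EReal) ≤ f p ∧ f p ≤ conjP f p

/-- The effective domain of an `EReal`-valued function on `E × E*`. -/
def domP (f : E × StrongDual ℝ E → EReal) : Set (E × StrongDual ℝ E) :=
  {p | ∃ r : ℝ, f p = (r : EReal)}

/-- A monotone subset of `E × E*`. -/
def MonoSet (A : Set (E × StrongDual ℝ E)) : Prop :=
  ∀ p ∈ A, ∀ r ∈ A, 0 ≤ (p.2 - r.2) (p.1 - r.1)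

/-- A maximally monotone subset of `E × E*`. -/
def MaxMono (A : Set (E × StrongDual ℝ E)) : Prop :=
  A.Nonempty ∧ MonoSet A ∧ ∀ C : Set (E × StrongDual ℝ E), MonoSet C → A ⊆ C → C = A

/-- `G(-J) = {(x,x*) : ½‖x‖² + ½‖x*‖² = -⟨x,x*⟩}` where `J` is the duality map. -/
def GnegJ (E : Type*) [NormedAddCommGroup E] [NormedSpace ℝ E] :
    Set (E × StrongDual ℝ E) :=
  {p | (1 / 2) * ‖p.1‖ ^ 2 + (1 / 2) * ‖p.2‖ ^ 2 = -(p.2 p.1)}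

/-- The graph of a multifunction `S : E ⇉ E*`. -/
def graphOf (S : E → Set (StrongDual ℝ E)) : Set (E × StrongDual ℝ E) :=
  {p | p.2 ∈ S p.1}

/-- `S : E ⇉ E*` is maximally monotone. -/
def MaxMonoOp (S : E → Set (StrongDual ℝ E)) : Prop := MaxMono (graphOf S)

/-- The Fitzpatrick function of a multifunction `S : E ⇉ E*`:
`φ_S(x,x*) = sup_{(s,s*) ∈ G(S)} (⟨x,s*⟩ + ⟨s,x*⟩ - ⟨s,s*⟩)`. -/
def fitz (S : E → Set (StrongDual ℝ E)) (p : E × StrongDual ℝ E) : EReal :=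
  ⨆ s : graphOf S,
    (((s : E × StrongDual ℝ E).2 p.1 + p.2 (s : E × StrongDual ℝ E).1
      - (s : E × StrongDual ℝ E).2 (s : E × StrongDual ℝ E).1 : ℝ) : EReal)

/-- The domain `D(S) = {x : Sx ≠ ∅}` of a multifunction. -/
def domOp (S : E → Set (StrongDual ℝ E)) : Set E := {x | (S x).Nonempty}



lemma pair_expand (x y : E × StrongDual ℝ E) :
    (x.2 - y.2) (x.1 - y.1) = x.2 x.1 - x.2 y.1 - y.2 x.1 + y.2 y.1 := by
  simp only [ContinuousLinearMap.sub_apply, map_sub]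
  ring

lemma q_lower (c : E × StrongDual ℝ E) :
    -((1/2) * ‖c.1‖^2 + (1/2) * ‖c.2‖^2) ≤ c.2 c.1 := by
  have h := (c.2).le_opNorm c.1
  rw [Real.norm_eq_abs] at h
  have h2 := (abs_le.mp h).1
  nlinarith [sq_nonneg (‖c.1‖ - ‖c.2‖)]

lemma maxmono_mem {A : Set (E × StrongDual ℝ E)} (hA : MaxMono A)
    (c : E × StrongDual ℝ E)
    (hc : ∀ a ∈ A, 0 ≤ (a.2 - c.2) (a.1 - c.1)) : c ∈ A := by
  obtain ⟨hne, hmono, hmax⟩ := hA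
  have hC : MonoSet (insert c A) := by
    intro p hp r hr
    rcases Set.mem_insert_iff.1 hp with rfl | hp' <;>
      rcases Set.mem_insert_iff.1 hr with rfl | hr'
    · simp
    · have := hc r hr'
      rw [pair_expand] at this ⊢
      linarith
    · exact hc p hp'
    · exact hmono p hp' r hr'
  have := hmax _ hC (Set.subset_insert _ _)
  rw [← this]
  exact Set.mem_insert _ _

set_option maxHeartbeats 800000 in
lemma key_surj (hrefl : ReflexiveSp E) {A : Set (E × StrongDual ℝ E)}
    (hA : MaxMono A) (w : E × StrongDual ℝ E) :
    ∃ a ∈ A, a - w ∈ GnegJ E := by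
  classical
  obtain ⟨⟨a₀, ha₀⟩, hmono, -⟩ := id hA
  set D : Set ((E × StrongDual ℝ E) × ℝ) :=
    {p | p.2 + ((1/2) * ‖p.1.1‖^2 + (1/2) * ‖p.1.2‖^2) < 0} with hD_def
  set K : Set ((E × StrongDual ℝ E) × ℝ) :=
    {p | ∀ a ∈ A, (a.2 - w.2) p.1.1 + p.1.2 (a.1 - w.1) - (a.2 - w.2) (a.1 - w.1) ≤ p.2}
    with hK_def
  -- D is open
  have hDopen : IsOpen D := by
    have hcont : Continuous fun p : (E × StrongDual ℝ E) × ℝ =>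
        p.2 + ((1/2) * ‖p.1.1‖^2 + (1/2) * ‖p.1.2‖^2) := by fun_prop
    exact isOpen_lt hcont continuous_const
  -- D is convex
  have hDconv : Convex ℝ D := by
    intro x hx y hy t s ht hs hts
    simp only [hD_def, Set.mem_setOf_eq] at hx hy ⊢
    simp only [Prod.fst_add, Prod.snd_add, Prod.smul_fst, Prod.smul_snd, smul_eq_mul]
    have h1 : ‖t • x.1.1 + s • y.1.1‖ ≤ t * ‖x.1.1‖ + s * ‖y.1.1‖ := by
      refine (norm_add_le _ _).trans ?_
      rw [norm_smul, norm_smul, Real.norm_eq_abs, Real.norm_eq_abs,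
        abs_of_nonneg ht, abs_of_nonneg hs]
    have h2 : ‖t • x.1.2 + s • y.1.2‖ ≤ t * ‖x.1.2‖ + s * ‖y.1.2‖ := by
      refine (norm_add_le _ _).trans ?_
      rw [norm_smul, norm_smul, Real.norm_eq_abs, Real.norm_eq_abs,
        abs_of_nonneg ht, abs_of_nonneg hs]
    have h1sq : ‖t • x.1.1 + s • y.1.1‖^2 ≤ (t * ‖x.1.1‖ + s * ‖y.1.1‖)^2 :=
      pow_le_pow_left₀ (norm_nonneg _) h1 2
    have h2sq : ‖t • x.1.2 + s • y.1.2‖^2 ≤ (t * ‖x.1.2‖ + s * ‖y.1.2‖)^2 :=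
      pow_le_pow_left₀ (norm_nonneg _) h2 2
    have hmix : t * (x.2 + ((1/2) * ‖x.1.1‖^2 + (1/2) * ‖x.1.2‖^2))
        + s * (y.2 + ((1/2) * ‖y.1.1‖^2 + (1/2) * ‖y.1.2‖^2)) < 0 := by
      rcases eq_or_lt_of_le ht with h0 | h0
      · have hs1 : s = 1 := by linarith
        rw [← h0, hs1]; simpa using hy
      · have := mul_neg_of_pos_of_neg h0 hx
        have := mul_nonpos_of_nonneg_of_nonpos hs hy.le
        linarith
    nlinarith [mul_nonneg ht hs, sq_nonneg (‖x.1.1‖ - ‖y.1.1‖),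
      sq_nonneg (‖x.1.2‖ - ‖y.1.2‖), hmix]
  -- K is convex
  have hKconv : Convex ℝ K := by
    intro x hx y hy t s ht hs hts
    simp only [hK_def, Set.mem_setOf_eq] at hx hy ⊢
    intro a ha
    have h1 := hx a ha
    have h2 := hy a ha
    simp only [Prod.fst_add, Prod.snd_add, Prod.smul_fst, Prod.smul_snd, smul_eq_mul,
      map_add, map_smul, smul_eq_mul, ContinuousLinearMap.add_apply,
      ContinuousLinearMap.smul_apply]
    have hCeq : t * ((a.2 - w.2) (a.1 - w.1)) + s * ((a.2 - w.2) (a.1 - w.1))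
        = (a.2 - w.2) (a.1 - w.1) := by rw [← add_mul, hts, one_mul]
    nlinarith [mul_le_mul_of_nonneg_left h1 ht, mul_le_mul_of_nonneg_left h2 hs, hCeq]
  -- D and K are disjoint (uses maximality)
  have hdisj : Disjoint D K := by
    rw [Set.disjoint_left]
    rintro ⟨c, s⟩ hpD hpK
    simp only [hD_def, Set.mem_setOf_eq] at hpD
    simp only [hK_def, Set.mem_setOf_eq] at hpK
    have hql := q_lower c
    by_cases hrel : ∀ a ∈ A, 0 ≤ (a.2 - (c + w).2) (a.1 - (c + w).1)
    · have hcA := maxmono_mem ⟨⟨a₀, ha₀⟩, hmono, hA.2.2⟩ _ hrel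
      have hk := hpK _ hcA
      simp only [Prod.fst_add, Prod.snd_add, add_sub_cancel_right, map_add,
        ContinuousLinearMap.add_apply] at hk
      nlinarith
    · push_neg at hrel
      obtain ⟨a, ha, hlt⟩ := hrel
      have hk := hpK a ha
      rw [pair_expand] at hlt
      simp only [Prod.fst_add, Prod.snd_add] at hlt
      simp only [map_sub, map_add, ContinuousLinearMap.sub_apply,
        ContinuousLinearMap.add_apply] at hlt hk
      nlinarith
  obtain ⟨f, u, hfD, hfK⟩ := geometric_hahn_banach_open hDconv hDopen hKconv hdisj
  obtain ⟨α, hα_def⟩ : ∃ α : ℝ, α = f (0, 1) := ⟨_, rfl⟩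
  have hsplit : ∀ (c : E × StrongDual ℝ E) (s : ℝ),
      f (c, s) = f (c, 0) + s * α := by
    intro c s
    rw [hα_def]
    have : ((c, s) : (E × StrongDual ℝ E) × ℝ)
        = (c, 0) + s • ((0 : E × StrongDual ℝ E), (1 : ℝ)) := by
      simp [Prod.ext_iff]
    rw [this, map_add, map_smul, smul_eq_mul]
  -- the K-membership of (a - w, q(a - w)) for a ∈ A
  have hKmem : ∀ a ∈ A, ((a - w : E × StrongDual ℝ E),
      (a.2 - w.2) (a.1 - w.1)) ∈ K := by
    intro a ha
    simp only [hK_def, Set.mem_setOf_eq]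
    intro a' ha'
    have hm := hmono a' ha' a ha
    rw [pair_expand] at hm
    simp only [Prod.fst_sub, Prod.snd_sub, map_sub, ContinuousLinearMap.sub_apply]
    nlinarith
  -- α is nonneg
  have hα0 : 0 ≤ α := by
    by_contra hneg
    push_neg at hneg
    set q₀ : ℝ := (a₀.2 - w.2) (a₀.1 - w.1) with hq₀
    have hKs : ∀ s : ℝ, q₀ ≤ s → ((a₀ - w : E × StrongDual ℝ E), s) ∈ K := by
      intro s hs
      have h0 := hKmem a₀ ha₀
      simp only [hK_def, Set.mem_setOf_eq] at h0 ⊢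
      intro a' ha'
      exact le_trans (h0 a' ha') hs
    set s₁ : ℝ := max q₀ ((u - f (a₀ - w, 0) - 1) / α) with hs₁
    have h1 := hfK _ (hKs s₁ (le_max_left _ _))
    rw [hsplit] at h1
    have h2 : s₁ * α ≤ ((u - f (a₀ - w, 0) - 1) / α) * α :=
      mul_le_mul_of_nonpos_right (le_max_right _ _) (le_of_lt hneg)
    rw [div_mul_cancel₀ _ (ne_of_lt hneg)] at h2
    linarith
  -- α is positive
  have hαpos : 0 < α := by
    rcases lt_or_eq_of_le hα0 with h | h
    · exact h
    · exfalso
      have hD1 : ∀ c : E × StrongDual ℝ E,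
          ((c, -((1/2) * ‖c.1‖^2 + (1/2) * ‖c.2‖^2) - 1)) ∈ D := by
        intro c
        simp only [hD_def, Set.mem_setOf_eq]
        linarith
      have hlt := fun c => hfD _ (hD1 c)
      have hge := hfK _ (hKmem a₀ ha₀)
      rw [hsplit, ← h] at hge
      have := hlt (a₀ - w)
      rw [hsplit, ← h] at this
      simp only [mul_zero, zero_mul, add_zero] at hge this
      linarith
  -- extract the functional components
  have hαne : α ≠ 0 := ne_of_gt hαpos
  obtain ⟨b₂, hb₂⟩ : ∃ b₂ : StrongDual ℝ E, ∀ v : E, α * b₂ v = - f ((v, 0), 0) := by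
    refine ⟨(-α⁻¹) • (f.comp ((ContinuousLinearMap.inl ℝ (E × StrongDual ℝ E) ℝ).comp
      (ContinuousLinearMap.inl ℝ E (StrongDual ℝ E)))), fun v => ?_⟩
    simp only [ContinuousLinearMap.smul_apply, ContinuousLinearMap.comp_apply,
      ContinuousLinearMap.inl_apply, smul_eq_mul]
    field_simp
  obtain ⟨b₁, hb₁ap⟩ : ∃ b₁ : E,
      ∀ c₂ : StrongDual ℝ E, α * c₂ b₁ = - f ((0, c₂), 0) := by
    obtain ⟨b₁, hb₁⟩ := hrefl ((-α⁻¹) • (f.comp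
      ((ContinuousLinearMap.inl ℝ (E × StrongDual ℝ E) ℝ).comp
        (ContinuousLinearMap.inr ℝ E (StrongDual ℝ E)))))
    refine ⟨b₁, fun c₂ => ?_⟩
    have h1 : c₂ b₁ = (NormedSpace.inclusionInDoubleDual ℝ E b₁) c₂ :=
      (NormedSpace.dual_def ℝ E b₁ c₂).symm
    rw [h1, hb₁]
    simp only [ContinuousLinearMap.smul_apply, ContinuousLinearMap.comp_apply,
      ContinuousLinearMap.inr_apply, ContinuousLinearMap.inl_apply, smul_eq_mul]
    field_simp
  have hfc : ∀ c : E × StrongDual ℝ E,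
      f (c, 0) = -(α * (b₂ c.1 + c.2 b₁)) := by
    intro c
    have hdec : ((c, 0) : (E × StrongDual ℝ E) × ℝ)
        = ((c.1, 0), 0) + ((0, c.2), 0) := by
      simp [Prod.ext_iff]
    rw [hdec, map_add]
    have h1 := hb₂ c.1
    have h2 := hb₁ap c.2
    linarith [h1, h2]
  -- inequality (I)
  have hI : ∀ (c₁ : E) (c₂ : StrongDual ℝ E),
      -(α * (b₂ c₁ + c₂ b₁)) ≤ u + ((1/2) * ‖c₁‖^2 + (1/2) * ‖c₂‖^2) * α := by
    intro c₁ c₂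
    set c : E × StrongDual ℝ E := (c₁, c₂) with hc_def
    have hb : ∀ ε : ℝ, 0 < ε →
        f (c, 0) + (-((1/2) * ‖c.1‖^2 + (1/2) * ‖c.2‖^2) - ε) * α < u := by
      intro ε hε
      have hmem : ((c, -((1/2) * ‖c.1‖^2 + (1/2) * ‖c.2‖^2) - ε)) ∈ D := by
        simp only [hD_def, Set.mem_setOf_eq]
        linarith
      have := hfD _ hmem
      rwa [hsplit] at this
    have hle : f (c, 0) - ((1/2) * ‖c.1‖^2 + (1/2) * ‖c.2‖^2) * α ≤ u := by
      by_contra hgt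
      push_neg at hgt
      set g0 : ℝ := (1/2) * ‖c.1‖^2 + (1/2) * ‖c.2‖^2 with hg0
      have hε : 0 < (f (c, 0) - g0 * α - u) / α := div_pos (by linarith) hαpos
      have hco : ((f (c, 0) - g0 * α - u) / α) * α = f (c, 0) - g0 * α - u :=
        div_mul_cancel₀ _ (ne_of_gt hαpos)
      have := hb _ hε
      nlinarith [this, hco]
    rw [hfc c] at hle
    have e1 : c.1 = c₁ := rfl
    have e2 : c.2 = c₂ := rfl
    rw [e1, e2] at hle
    linarith
  -- inequality (II)
  have hII : ∀ a ∈ A, u ≤ -(α * (b₂ (a.1 - w.1) + (a.2 - w.2) b₁))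
      + ((a.2 - w.2) (a.1 - w.1)) * α := by
    intro a ha
    have h := hfK _ (hKmem a ha)
    rw [hsplit, hfc] at h
    simp only [Prod.fst_sub, Prod.snd_sub] at h
    linarith [h]
  -- norming functional for b₁
  obtain ⟨c₂, hc₂val, hc₂norm⟩ :
      ∃ c₂ : StrongDual ℝ E, c₂ b₁ = -(‖b₁‖^2) ∧ ‖c₂‖ = ‖b₁‖ := by
    by_cases hb : b₁ = 0
    · exact ⟨0, by simp [hb], by simp [hb]⟩
    · obtain ⟨g, hg1, hg2⟩ := exists_dual_vector ℝ b₁ (norm_ne_zero_iff.mpr hb)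
      refine ⟨(-‖b₁‖) • g, ?_, ?_⟩
      · simp only [ContinuousLinearMap.smul_apply, smul_eq_mul, hg2]
        show -‖b₁‖ * ‖b₁‖ = -‖b₁‖^2
        ring
      · rw [norm_smul, hg1]
        simp [abs_of_nonneg (norm_nonneg b₁)]
  -- the key norm bound
  have hν : ((1/2) * ‖b₁‖^2 + (1/2) * ‖b₂‖^2) * α ≤ u := by
    have hstep : ∀ ε : ℝ, 0 < ε →
        ((1/2) * ‖b₁‖^2 + (1/2) * ‖b₂‖^2) * α ≤ u + ε * α := by
      intro ε hε
      obtain ⟨c₁, hc₁n, hc₁v⟩ : ∃ c₁ : E, ‖c₁‖ ≤ ‖b₂‖ ∧ b₂ c₁ ≤ -(‖b₂‖^2) + ε := by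
        by_cases hb : b₂ = 0
        · refine ⟨0, by simp [hb], ?_⟩
          simp only [hb, map_zero, ContinuousLinearMap.zero_apply, norm_zero]
          nlinarith
        · have hbn : 0 < ‖b₂‖ := norm_pos_iff.mpr hb
          have hr : ‖b₂‖ - ε / ‖b₂‖ < ‖b₂‖ := by
            have := div_pos hε hbn
            linarith
          obtain ⟨x, hx1, hx2⟩ := b₂.exists_lt_apply_of_lt_opNorm hr
          rw [Real.norm_eq_abs] at hx2
          have habs := le_abs_self (b₂ x)
          have habs' := neg_abs_le (b₂ x)
          have hdm : (ε / ‖b₂‖) * ‖b₂‖ = ε := div_mul_cancel₀ _ (ne_of_gt hbn)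
          rcases le_or_gt 0 (b₂ x) with hsign | hsign
          · refine ⟨(-‖b₂‖) • x, ?_, ?_⟩
            · rw [norm_smul, Real.norm_eq_abs, abs_neg, abs_of_nonneg (norm_nonneg b₂)]
              nlinarith
            · rw [map_smul, smul_eq_mul]
              rw [abs_of_nonneg hsign] at hx2
              nlinarith
          · refine ⟨(‖b₂‖) • x, ?_, ?_⟩
            · rw [norm_smul, Real.norm_eq_abs, abs_of_nonneg (norm_nonneg b₂)]
              nlinarith
            · rw [map_smul, smul_eq_mul]
              rw [abs_of_neg hsign] at hx2
              nlinarith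
      have h1 := hI c₁ c₂
      have hsq : ‖c₁‖^2 ≤ ‖b₂‖^2 := pow_le_pow_left₀ (norm_nonneg _) hc₁n 2
      have hsq2 : ‖c₂‖^2 = ‖b₁‖^2 := by rw [hc₂norm]
      nlinarith [mul_le_mul_of_nonneg_left hc₁v (le_of_lt hαpos),
        mul_le_mul_of_nonneg_left hsq (le_of_lt hαpos), h1, hc₂val, hsq2,
        le_of_lt hαpos]
    by_contra hgt
    push_neg at hgt
    set X : ℝ := ((1/2) * ‖b₁‖^2 + (1/2) * ‖b₂‖^2) * α with hX
    have hε : 0 < (X - u) / (2 * α) := div_pos (by linarith) (by linarith)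
    have hco : ((X - u) / (2 * α)) * α = (X - u) / 2 := by
      field_simp
    have := hstep _ hε
    rw [hco] at this
    linarith
  -- b + w is monotonically related to A, hence in A
  have hqb : -((1/2) * ‖b₁‖^2 + (1/2) * ‖b₂‖^2) ≤ b₂ b₁ := q_lower (b₁, b₂)
  have hrelc : ∀ a ∈ A, 0 ≤ (a.2 - ((b₁, b₂) + w).2) (a.1 - ((b₁, b₂) + w).1) := by
    intro a ha
    have h2 := hII a ha
    rw [pair_expand]
    simp only [Prod.fst_add, Prod.snd_add, map_add, ContinuousLinearMap.add_apply]
    simp only [map_sub, ContinuousLinearMap.sub_apply] at h2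
    nlinarith [h2, hν, hqb, hαpos,
      mul_le_mul_of_nonneg_left hqb (le_of_lt hαpos)]
  have hbA := maxmono_mem ⟨⟨a₀, ha₀⟩, hmono, hA.2.2⟩ _ hrelc
  have hfin := hII _ hbA
  simp only [Prod.fst_add, Prod.snd_add, add_sub_cancel_right] at hfin
  refine ⟨(b₁, b₂) + w, hbA, ?_⟩
  rw [add_sub_cancel_right]
  show (1 / 2) * ‖b₁‖ ^ 2 + (1 / 2) * ‖b₂‖ ^ 2 = -(b₂ b₁)
  have hup : ((1/2) * ‖b₁‖^2 + (1/2) * ‖b₂‖^2) + b₂ b₁ ≤ 0 := by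
    nlinarith [hfin, hν, hαpos]
  linarith

/-- if `E` is a nonzero reflexive Banach space and `A` is a monotone
subset of `E × E*`, then `A` is maximally monotone iff `A - G(-J) = E × E*`. -/
theorem stmt13 [CompleteSpace E] [Nontrivial E] (hrefl : ReflexiveSp E)
    (A : Set (E × StrongDual ℝ E)) (hmono : MonoSet A) :
    MaxMono A ↔ A - GnegJ E = (Set.univ : Set (E × StrongDual ℝ E)) := by
  constructor
  · intro hAmax
    apply Set.eq_univ_of_forall
    intro w
    obtain ⟨a, ha, hg⟩ := key_surj hrefl hAmax w
    exact Set.mem_sub.mpr ⟨a, ha, a - w, hg, sub_sub_cancel a w⟩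
  · intro hsurj
    refine ⟨?_, hmono, ?_⟩
    · have h0 : (0 : E × StrongDual ℝ E) ∈ A - GnegJ E := by
        rw [hsurj]; exact Set.mem_univ _
      obtain ⟨a, ha, b, hb, hab⟩ := Set.mem_sub.mp h0
      exact ⟨a, ha⟩
    · intro C hC hAC
      refine Set.Subset.antisymm ?_ hAC
      intro c hc
      have hcmem : c ∈ A - GnegJ E := by
        rw [hsurj]; exact Set.mem_univ _
      obtain ⟨a, ha, b, hb, hab⟩ := Set.mem_sub.mp hcmem
      have hm := hC a (hAC ha) c hc
      have hab' : a - c = b := by rw [← hab]; abel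
      have e1 := congrArg Prod.fst hab'
      have e2 := congrArg Prod.snd hab'
      simp only [Prod.fst_sub, Prod.snd_sub] at e1 e2
      rw [e1, e2] at hm
      simp only [GnegJ, Set.mem_setOf_eq] at hb
      have h1 : ‖b.1‖ = 0 := by nlinarith [norm_nonneg b.1, norm_nonneg b.2]
      have h2 : ‖b.2‖ = 0 := by nlinarith [norm_nonneg b.1, norm_nonneg b.2]
      have hb1 : b.1 = 0 := norm_eq_zero.mp h1
      have hb2 : b.2 = 0 := norm_eq_zero.mp h2
      have hb0 : b = 0 := by
        rw [Prod.ext_iff]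
        exact ⟨by simp [hb1], by simp [hb2]⟩
      rw [← hab, hb0, sub_zero]
      exact ha
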